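/- Let h : 𝔽₂^k → {−1,1}, let m ∈ ℕ with m ≤ k, and let p ∈ (0, 1/2) with (1 − 2p)^{m+1} ≤ 1 − c for constants. Then ϑ^p(Ω × (𝔽₂^k \ Ω)) ≥ (1/4)(1 − (1−2p)^{m+1}) ∑_{|A| > m} ĥ(A)², where h = (−1)^{1_Ω}. -/

import Mathlib

open Finset

/-- Walsh function `W_A`. -/
def walsh {k : ℕ} (A : Finset (Fin k)) (x : Fin k → ZMod 2) : ℝ :=
  ∏ j ∈ A, (-1 : ℝ) ^ ((x j).val)

/-- Fourier–Walsh coefficient with respect to the uniform measure on `𝔽₂^k`. -/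
noncomputable def wcoeff {k : ℕ} (φ : (Fin k → ZMod 2) → ℝ) (A : Finset (Fin k)) : ℝ :=
  (∑ x : Fin k → ZMod 2, φ x * walsh A x) / 2 ^ k

/-- The noise measure `ϑ^p` on `𝔽₂^k × 𝔽₂^k`. -/
noncomputable def noiseMeasure {k : ℕ} (p : ℝ) (x y : Fin k → ZMod 2) : ℝ :=
  p ^ hammingDist x y * (1 - p) ^ (k - hammingDist x y) / 2 ^ k

lemma zmod2_cases (a : ZMod 2) : a = 0 ∨ a = 1 := by revert a; decide

lemma sum_zmod2 (g : ZMod 2 → ℝ) : ∑ c, g c = g 0 + g 1 := by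
  rw [show (univ : Finset (ZMod 2)) = {0, 1} from by decide, Finset.sum_pair (by decide)]

lemma eps_eq (a b : ZMod 2) : (-1:ℝ) ^ a.val * (-1:ℝ) ^ b.val = if a = b then 1 else -1 := by
  rcases zmod2_cases a with rfl | rfl <;> rcases zmod2_cases b with rfl | rfl <;>
    norm_num [ZMod.val_zero, ZMod.val_one]

lemma walsh_mul {k : ℕ} (A : Finset (Fin k)) (x y : Fin k → ZMod 2) :
    walsh A x * walsh A y = ∏ j ∈ A, (if x j = y j then (1:ℝ) else -1) := by
  rw [walsh, walsh, ← Finset.prod_mul_distrib]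
  exact Finset.prod_congr rfl fun j _ => eps_eq _ _

lemma ker_eq {k : ℕ} (p : ℝ) (x y : Fin k → ZMod 2) :
    p ^ hammingDist x y * (1 - p) ^ (k - hammingDist x y)
      = ∏ j : Fin k, (if x j = y j then 1 - p else p) := by
  rw [Finset.prod_ite, Finset.prod_const, Finset.prod_const]
  have hd : hammingDist x y = (univ.filter fun j => ¬ x j = y j).card := rfl
  have he : (univ.filter fun j => x j = y j).card = k - hammingDist x y := by
    have hk : (univ.filter fun j => x j = y j).card
        + (univ.filter fun j => ¬ x j = y j).card = k := by
      rw [Finset.card_filter_add_card_filter_not, card_univ, Fintype.card_fin]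
    omega
  rw [he, ← hd]; ring

lemma sum_ker {k : ℕ} (p : ℝ) (x : Fin k → ZMod 2) :
    ∑ y : Fin k → ZMod 2, ∏ j : Fin k, (if x j = y j then 1 - p else p) = 1 := by
  rw [← Fintype.prod_sum (fun j (c : ZMod 2) => if x j = c then 1 - p else p)]
  have h1 : ∀ j : Fin k, (∑ c : ZMod 2, if x j = c then 1 - p else p) = 1 := by
    intro j
    rw [sum_zmod2]
    rcases zmod2_cases (x j) with h | h <;> rw [h] <;> norm_num
  simp [h1]

lemma sum_c_walsh {k : ℕ} (c : ℝ) (x y : Fin k → ZMod 2) :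
    ∑ A : Finset (Fin k), c ^ A.card * (walsh A x * walsh A y)
      = ∏ j : Fin k, (1 + c * (if x j = y j then (1:ℝ) else -1)) := by
  have h := Fintype.prod_add (fun j : Fin k => c * (if x j = y j then (1:ℝ) else -1))
    (fun _ => (1:ℝ))
  simp only [Finset.prod_const_one, mul_one] at h
  calc ∑ A : Finset (Fin k), c ^ A.card * (walsh A x * walsh A y)
      = ∑ A : Finset (Fin k), ∏ j ∈ A, (c * (if x j = y j then (1:ℝ) else -1)) := by
        refine Finset.sum_congr rfl fun A _ => ?_
        rw [walsh_mul, Finset.prod_mul_distrib, Finset.prod_const]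
    _ = ∏ j : Fin k, (c * (if x j = y j then (1:ℝ) else -1) + 1) := h.symm
    _ = ∏ j : Fin k, (1 + c * (if x j = y j then (1:ℝ) else -1)) :=
        Finset.prod_congr rfl fun j _ => add_comm _ _

lemma prod_noise {k : ℕ} (p : ℝ) (x y : Fin k → ZMod 2) :
    ∏ j : Fin k, (1 + (1 - 2 * p) * (if x j = y j then (1:ℝ) else -1))
      = 2 ^ k * ∏ j : Fin k, (if x j = y j then 1 - p else p) := by
  calc ∏ j : Fin k, (1 + (1 - 2 * p) * (if x j = y j then (1:ℝ) else -1))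
      = ∏ j : Fin k, (2 * (if x j = y j then 1 - p else p)) := by
        refine Finset.prod_congr rfl fun j _ => ?_
        split <;> ring
    _ = (∏ _j : Fin k, (2:ℝ)) * ∏ j : Fin k, (if x j = y j then 1 - p else p) :=
        Finset.prod_mul_distrib
    _ = 2 ^ k * ∏ j : Fin k, (if x j = y j then 1 - p else p) := by
        rw [Finset.prod_const, card_univ, Fintype.card_fin]

lemma prod_one_eps {k : ℕ} (x y : Fin k → ZMod 2) :
    ∏ j : Fin k, (1 + (if x j = y j then (1:ℝ) else -1))
      = if x = y then (2:ℝ) ^ k else 0 := by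
  by_cases hxy : x = y
  · subst hxy
    simp [Finset.prod_const, card_univ]
    norm_num
  · rw [if_neg hxy]
    obtain ⟨j, hj⟩ := Function.ne_iff.1 hxy
    exact Finset.prod_eq_zero (mem_univ j) (by simp [hj])

lemma stepB {k : ℕ} (h : (Fin k → ZMod 2) → ℝ) (c : ℝ) :
    ∑ A : Finset (Fin k), c ^ A.card * wcoeff h A ^ 2
      = (∑ x : Fin k → ZMod 2, ∑ y : Fin k → ZMod 2,
          h x * h y * ∏ j : Fin k, (1 + c * (if x j = y j then (1:ℝ) else -1)))
        / (2 ^ k * 2 ^ k) := by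
  have key : ∀ A : Finset (Fin k), wcoeff h A ^ 2 =
      (∑ x : Fin k → ZMod 2, ∑ y : Fin k → ZMod 2,
        (h x * walsh A x) * (h y * walsh A y)) / (2 ^ k * 2 ^ k) := by
    intro A
    rw [wcoeff, pow_two, div_mul_div_comm, Finset.sum_mul_sum]
  simp_rw [key, ← mul_div_assoc]
  rw [← Finset.sum_div]
  congr 1
  simp_rw [Finset.mul_sum]
  rw [Finset.sum_comm]
  refine Finset.sum_congr rfl fun x _ => ?_
  rw [Finset.sum_comm]
  refine Finset.sum_congr rfl fun y _ => ?_
  rw [← sum_c_walsh c x y, Finset.mul_sum]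
  exact Finset.sum_congr rfl fun A _ => by ring

/-- Tail lower bound for noise sensitivity: with `h = (-1)^{1_Ω}`, `m ≤ k` and
`p ∈ (0,1/2)`, one has
`ϑ^p(Ω × Ωᶜ) ≥ (1/4)(1-(1-2p)^{m+1}) ∑_{|A| > m} ĥ(A)²`. -/
theorem stmt_12 {k : ℕ} (Ω : Finset (Fin k → ZMod 2)) (m : ℕ) (hm : m ≤ k)
    (p : ℝ) (hp : p ∈ Set.Ioo (0 : ℝ) (1 / 2)) :
    (1 / 4) * (1 - (1 - 2 * p) ^ (m + 1)) *
        (∑ A ∈ univ.filter (fun A : Finset (Fin k) => m < A.card),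
          wcoeff (fun x => if x ∈ Ω then (-1 : ℝ) else 1) A ^ 2)
      ≤ ∑ x ∈ Ω, ∑ y ∈ Ωᶜ, noiseMeasure p x y := by
  obtain ⟨hp0, hp2⟩ := hp
  set h : (Fin k → ZMod 2) → ℝ := fun x => if x ∈ Ω then (-1 : ℝ) else 1 with hh
  have hsq : ∀ x, h x * h x = 1 := by
    intro x; simp only [hh]; split <;> norm_num
  have hcard : (Fintype.card (Fin k → ZMod 2) : ℝ) = 2 ^ k := by
    simp [Fintype.card_fun]
  have twokpos : (0:ℝ) < 2 ^ k := by positivity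
  -- Parseval
  have hps : ∑ A : Finset (Fin k), wcoeff h A ^ 2 = 1 := by
    have hB := stepB h 1
    simp only [one_pow, one_mul] at hB
    rw [hB]
    have hin : ∀ x : Fin k → ZMod 2,
        (∑ y : Fin k → ZMod 2, h x * h y *
          ∏ j : Fin k, (1 + (if x j = y j then (1:ℝ) else -1))) = 2 ^ k := by
      intro x
      have h2 : ∀ y : Fin k → ZMod 2, h x * h y *
          ∏ j : Fin k, (1 + (if x j = y j then (1:ℝ) else -1))
          = if x = y then h x * h y * 2 ^ k else 0 := by
        intro y; rw [prod_one_eps]; split <;> simp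
      simp_rw [h2]
      rw [Finset.sum_ite_eq univ x (fun y => h x * h y * 2 ^ k)]
      simp [hsq x]
    simp_rw [hin]
    rw [Finset.sum_const, card_univ, nsmul_eq_mul, hcard]
    field_simp
  -- spectral identity
  have hS : ∑ A : Finset (Fin k), (1 - 2 * p) ^ A.card * wcoeff h A ^ 2
      = ∑ x : Fin k → ZMod 2, ∑ y : Fin k → ZMod 2, h x * h y * noiseMeasure p x y := by
    rw [stepB h (1 - 2 * p)]
    simp_rw [prod_noise, ← ker_eq, noiseMeasure]
    rw [Finset.sum_div]
    refine Finset.sum_congr rfl fun x _ => ?_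
    rw [Finset.sum_div]
    refine Finset.sum_congr rfl fun y _ => ?_
    field_simp
  -- total mass
  have hM : ∑ x : Fin k → ZMod 2, ∑ y : Fin k → ZMod 2, noiseMeasure p x y = 1 := by
    have hin : ∀ x : Fin k → ZMod 2,
        ∑ y : Fin k → ZMod 2, noiseMeasure p x y = 1 / 2 ^ k := by
      intro x
      simp_rw [noiseMeasure]
      rw [← Finset.sum_div]
      simp_rw [ker_eq]
      rw [sum_ker]
    simp_rw [hin]
    rw [Finset.sum_const, card_univ, nsmul_eq_mul, hcard]
    field_simp
  -- symmetry
  have hsym : ∀ x y : Fin k → ZMod 2, noiseMeasure p x y = noiseMeasure p y x := by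
    intro x y; rw [noiseMeasure, noiseMeasure, hammingDist_comm]
  have hU : ∑ x : Fin k → ZMod 2, ∑ y : Fin k → ZMod 2, h y * noiseMeasure p x y
      = ∑ x : Fin k → ZMod 2, ∑ y : Fin k → ZMod 2, h x * noiseMeasure p x y := by
    rw [Finset.sum_comm]
    exact Finset.sum_congr rfl fun x _ => Finset.sum_congr rfl fun y _ => by rw [hsym]
  -- indicator identity
  have e1 : ∑ x ∈ Ω, ∑ y ∈ Ωᶜ, noiseMeasure p x y
      = ∑ x : Fin k → ZMod 2, ∑ y : Fin k → ZMod 2,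
          ((1 - h x)/2) * ((1 + h y)/2) * noiseMeasure p x y := by
    have step1 : ∀ x : Fin k → ZMod 2, ∀ y : Fin k → ZMod 2,
        ((1 - h x)/2) * ((1 + h y)/2) * noiseMeasure p x y
        = if x ∈ Ω then (if y ∈ Ωᶜ then noiseMeasure p x y else 0) else 0 := by
      intro x y
      by_cases hx : x ∈ Ω <;> by_cases hy : y ∈ Ω <;>
        simp [hh, hx, hy] <;> ring
    simp_rw [step1]
    rw [show (∑ x : Fin k → ZMod 2, ∑ y : Fin k → ZMod 2,
        if x ∈ Ω then (if y ∈ Ωᶜ then noiseMeasure p x y else 0) else 0)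
      = ∑ x : Fin k → ZMod 2,
        if x ∈ Ω then (∑ y : Fin k → ZMod 2,
          if y ∈ Ωᶜ then noiseMeasure p x y else 0) else 0 from
      Finset.sum_congr rfl fun x _ => by split <;> simp]
    rw [Finset.sum_ite_mem, univ_inter]
    exact Finset.sum_congr rfl fun x _ => by rw [Finset.sum_ite_mem, univ_inter]
  -- expansion
  have hT : ∑ x ∈ Ω, ∑ y ∈ Ωᶜ, noiseMeasure p x y
      = (1/4) * (1 - ∑ x : Fin k → ZMod 2, ∑ y : Fin k → ZMod 2,
          h x * h y * noiseMeasure p x y) := by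
    rw [e1]
    have inner : ∀ x : Fin k → ZMod 2,
        ∑ y : Fin k → ZMod 2, ((1 - h x)/2) * ((1 + h y)/2) * noiseMeasure p x y
        = (∑ y : Fin k → ZMod 2, noiseMeasure p x y
           + ∑ y : Fin k → ZMod 2, h y * noiseMeasure p x y
           - ∑ y : Fin k → ZMod 2, h x * noiseMeasure p x y
           - ∑ y : Fin k → ZMod 2, h x * h y * noiseMeasure p x y) / 4 := by
      intro x
      rw [← Finset.sum_add_distrib, ← Finset.sum_sub_distrib, ← Finset.sum_sub_distrib,
        Finset.sum_div]
      exact Finset.sum_congr rfl fun y _ => by ring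
    simp_rw [inner]
    rw [← Finset.sum_div]
    rw [Finset.sum_sub_distrib, Finset.sum_sub_distrib, Finset.sum_add_distrib]
    rw [hM, hU]
    ring
  have hfinal : ∑ x ∈ Ω, ∑ y ∈ Ωᶜ, noiseMeasure p x y
      = (1/4) * ∑ A : Finset (Fin k),
          (wcoeff h A ^ 2 - (1 - 2 * p) ^ A.card * wcoeff h A ^ 2) := by
    rw [hT]
    congr 1
    rw [Finset.sum_sub_distrib, hps, hS]
  rw [hfinal]
  have hc0 : (0:ℝ) ≤ 1 - 2 * p := by linarith
  have hc1 : (1:ℝ) - 2 * p ≤ 1 := by linarith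
  have hterm : ∀ A : Finset (Fin k),
      0 ≤ wcoeff h A ^ 2 - (1 - 2 * p) ^ A.card * wcoeff h A ^ 2 := by
    intro A
    have h1 : (1 - 2 * p) ^ A.card ≤ 1 := pow_le_one₀ hc0 hc1
    nlinarith [sq_nonneg (wcoeff h A)]
  calc (1 / 4) * (1 - (1 - 2 * p) ^ (m + 1)) *
        (∑ A ∈ univ.filter (fun A : Finset (Fin k) => m < A.card), wcoeff h A ^ 2)
      = (1/4) * ∑ A ∈ univ.filter (fun A : Finset (Fin k) => m < A.card),
          (1 - (1 - 2 * p) ^ (m + 1)) * wcoeff h A ^ 2 := by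
        rw [Finset.mul_sum]; rw [Finset.mul_sum]; exact Finset.sum_congr rfl fun A _ => by ring
    _ ≤ (1/4) * ∑ A ∈ univ.filter (fun A : Finset (Fin k) => m < A.card),
          (wcoeff h A ^ 2 - (1 - 2 * p) ^ A.card * wcoeff h A ^ 2) := by
        refine mul_le_mul_of_nonneg_left (Finset.sum_le_sum fun A hA => ?_) (by norm_num)
        have hcardA : m + 1 ≤ A.card := (Finset.mem_filter.1 hA).2
        have hpow : (1 - 2 * p) ^ A.card ≤ (1 - 2 * p) ^ (m + 1) :=
          pow_le_pow_of_le_one hc0 hc1 hcardA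
        nlinarith [sq_nonneg (wcoeff h A)]
    _ ≤ (1/4) * ∑ A : Finset (Fin k),
          (wcoeff h A ^ 2 - (1 - 2 * p) ^ A.card * wcoeff h A ^ 2) := by
        refine mul_le_mul_of_nonneg_left ?_ (by norm_num)
        exact Finset.sum_le_sum_of_subset_of_nonneg (Finset.filter_subset _ _)
          (fun A _ _ => hterm A)
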